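/- A random non-forced choice model ρ on X satisfies axioms A1, A2 and A3 if and only if ρ is a decision-conflict logit, i.e. there exist a strictly positive function u : X → ℝ and a nonnegative function D on menus with D(A) = 0 if and only if |A| = 1, such that ρ(a,A) = u(a)/(∑_{b∈A} u(b) + D(A)) for every menu A and every a ∈ A. -/

import Mathlib

open Finset

variable {X : Type*} [Fintype X] [DecidableEq X]

/-- The probability of choosing the outside option (deferring) at menu `A`. -/
noncomputable def defer (ρ : Finset X → X → ℝ) (A : Finset X) : ℝ :=
  1 - ∑ a ∈ A, ρ A a

/-- `ρ` is a random non-forced choice model on `X`. -/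
def IsRNFC (ρ : Finset X → X → ℝ) : Prop :=
  ∀ A : Finset X, A.Nonempty →
    (∀ a ∈ A, 0 ≤ ρ A a ∧ ρ A a ≤ 1) ∧
    (∀ a, a ∉ A → ρ A a = 0) ∧
    (∑ a ∈ A, ρ A a) ≤ 1

/-- Axiom A1 (Desirability). -/
def A1 (ρ : Finset X → X → ℝ) : Prop := ∀ a : X, ρ {a} a = 1

/-- Axiom A2 (Positivity). -/
def A2 (ρ : Finset X → X → ℝ) : Prop :=
  ∀ A : Finset X, 2 ≤ A.card → (∀ a ∈ A, 0 < ρ A a) ∧ 0 < defer ρ A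

/-- Axiom A3 (The Active-Choice Luce Axiom). -/
def A3 (ρ : Finset X → X → ℝ) : Prop :=
  ∀ A B : Finset X, A.Nonempty → B.Nonempty →
    ∀ a ∈ A ∩ B, ∀ b ∈ A ∩ B, ρ A a * ρ B b = ρ B a * ρ A b

/-- `ρ` is a decision-conflict logit with representation `(u, D)`. -/
def IsDCL (ρ : Finset X → X → ℝ) (u : X → ℝ) (D : Finset X → ℝ) : Prop :=
  (∀ a, 0 < u a) ∧
  (∀ A : Finset X, A.Nonempty → 0 ≤ D A ∧ (D A = 0 ↔ A.card = 1)) ∧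
  (∀ A : Finset X, A.Nonempty → ∀ a ∈ A, ρ A a = u a / ((∑ b ∈ A, u b) + D A))

theorem stmt0 (hX : 1 < Fintype.card X) (ρ : Finset X → X → ℝ) (hρ : IsRNFC ρ) :
    (A1 ρ ∧ A2 ρ ∧ A3 ρ) ↔ ∃ u D, IsDCL ρ u D := by
  constructor
  · rintro ⟨h1, h2, h3⟩
    haveI : Nonempty X := Fintype.card_pos_iff.mp (by omega)
    set u : X → ℝ := ρ univ with hu_def
    have hcard : 2 ≤ (univ : Finset X).card := by rw [card_univ]; omega
    have hu : ∀ a, 0 < u a := fun a => (h2 univ hcard).1 a (mem_univ a)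
    have hkey : ∀ A : Finset X, A.Nonempty → ∀ a ∈ A, ∀ b ∈ A,
        ρ A a * u b = u a * ρ A b := by
      intro A hA a ha b hb
      have := h3 A univ hA univ_nonempty a (by simp [ha]) b (by simp [hb])
      linarith
    have hpos : ∀ A : Finset X, ∀ a ∈ A, 0 < ρ A a := by
      intro A a ha
      rcases Nat.lt_or_ge A.card 2 with hc | hc
      · have h1' : A.card = 1 := by
          have : 1 ≤ A.card := card_pos.mpr ⟨a, ha⟩
          omega
        obtain ⟨x, hx⟩ := card_eq_one.mp h1'
        have hax : a = x := by simpa [hx] using ha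
        rw [hx, ← hax, h1 a]; norm_num
      · exact (h2 A hc).1 a ha
    set D : Finset X → ℝ := fun A =>
      if h : A.Nonempty then u h.choose / ρ A h.choose - ∑ b ∈ A, u b else 0 with hD_def
    have hden : ∀ A : Finset X, ∀ h : A.Nonempty,
        (∑ b ∈ A, u b) + D A = u h.choose / ρ A h.choose := by
      intro A h
      rw [hD_def]; simp only [dif_pos h]; ring
    have hdenpos : ∀ A : Finset X, ∀ h : A.Nonempty, 0 < (∑ b ∈ A, u b) + D A := by
      intro A h
      rw [hden A h]
      exact div_pos (hu _) (hpos A _ h.choose_spec)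
    have hform : ∀ A : Finset X, ∀ h : A.Nonempty, ∀ a ∈ A,
        ρ A a = u a / ((∑ b ∈ A, u b) + D A) := by
      intro A h a ha
      have hk := hkey A h a ha h.choose h.choose_spec
      rw [hden A h]
      have h₀ : 0 < ρ A h.choose := hpos A _ h.choose_spec
      have h₁ : 0 < u h.choose := hu _
      field_simp
      linarith
    have hsum : ∀ A : Finset X, ∀ h : A.Nonempty,
        ∑ a ∈ A, ρ A a = (∑ a ∈ A, u a) / ((∑ b ∈ A, u b) + D A) := by
      intro A h
      rw [sum_congr rfl (fun a ha => hform A h a ha), ← sum_div]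
    refine ⟨u, D, hu, ?_, fun A h a ha => hform A h a ha⟩
    intro A h
    have hS : 0 < ∑ b ∈ A, u b := sum_pos (fun b _ => hu b) h
    have hdp := hdenpos A h
    have hle : (∑ a ∈ A, u a) / ((∑ b ∈ A, u b) + D A) ≤ 1 := by
      rw [← hsum A h]; exact (hρ A h).2.2
    have hDnn : 0 ≤ D A := by
      rw [div_le_one hdp] at hle
      linarith
    refine ⟨hDnn, ?_, ?_⟩
    · intro hD0
      by_contra hc1
      have hc2 : 2 ≤ A.card := by
        have : 1 ≤ A.card := card_pos.mpr h
        omega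
      have hdef := (h2 A hc2).2
      unfold defer at hdef
      rw [hsum A h, hD0] at hdef
      rw [add_zero, div_self (ne_of_gt hS)] at hdef
      linarith
    · intro hc1
      obtain ⟨x, hx⟩ := card_eq_one.mp hc1
      subst hx
      have hne : ({x} : Finset X).Nonempty := singleton_nonempty x
      have hch : hne.choose = x := mem_singleton.mp hne.choose_spec
      rw [hD_def]
      simp only [dif_pos hne, hch, h1 x, sum_singleton, div_one, sub_self]
  · rintro ⟨u, D, hu, hD, hform⟩
    have hden : ∀ A : Finset X, A.Nonempty → 0 < (∑ b ∈ A, u b) + D A := fun A hA =>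
      add_pos_of_pos_of_nonneg (sum_pos (fun b _ => hu b) hA) (hD A hA).1
    refine ⟨?_, ?_, ?_⟩
    · intro a
      have hne : ({a} : Finset X).Nonempty := singleton_nonempty a
      have hD0 : D {a} = 0 := (hD {a} hne).2.mpr (by simp)
      rw [hform {a} hne a (mem_singleton_self a), hD0, sum_singleton, add_zero,
        div_self (ne_of_gt (hu a))]
    · intro A hA2
      have hA : A.Nonempty := card_pos.mp (by omega)
      have hDpos : 0 < D A := by
        rcases (hD A hA).1.eq_or_lt with hh | hh
        · exact absurd ((hD A hA).2.mp hh.symm) (by omega)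
        · exact hh
      refine ⟨fun a ha => ?_, ?_⟩
      · rw [hform A hA a ha]
        exact div_pos (hu a) (hden A hA)
      · have hs : ∑ a ∈ A, ρ A a = (∑ a ∈ A, u a) / ((∑ b ∈ A, u b) + D A) := by
          rw [sum_congr rfl (fun a ha => hform A hA a ha), ← sum_div]
        unfold defer
        rw [hs]
        have : (∑ a ∈ A, u a) / ((∑ b ∈ A, u b) + D A) < 1 := by
          rw [div_lt_one (hden A hA)]
          linarith
        linarith
    · intro A B hA hB a ha b hb
      rw [mem_inter] at ha hb
      rw [hform A hA a ha.1, hform B hB b hb.2, hform B hB a ha.2, hform A hA b hb.1]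
      ring
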